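/- Let K be a field, V a vector space over K, and p a positive integer. Let v₁, …, v_{p+1} ∈ V be linearly independent with U = span{v₁, …, v_{p+1}}, and let u₁, u₂, u₃ ∈ V be pairwise non-proportional vectors (u_ℓ ∉ span{u_k} for k ≠ ℓ) with u_k ∉ U for k = 1, 2, 3. Suppose W is a K-subspace of V with finrank W = 2 such that u₁ ∈ W, u₂ ∈ W, and u₃ ∉ W. Then there is no K-subspace W′ of V with finrank W′ = 2 that contains at least four of the p+4 vectors v₁, …, v_{p+1}, u₁, u₂, u₃ (i.e. the vectors at four distinct positions of this list). -/

import Mathlib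

lemma inj2_aux {α : Type*} {a b : α} (hab : a ≠ b) : Function.Injective ![a, b] := by
  intro s t hst
  fin_cases s <;> fin_cases t <;> simp_all

lemma inj3_aux {α : Type*} {a b c : α} (hab : a ≠ b) (hac : a ≠ c) (hbc : b ≠ c) :
    Function.Injective ![a, b, c] := by
  intro s t hst
  fin_cases s <;> fin_cases t <;> simp_all

lemma fin3_cover (x y z : Fin 3) (hxy : x ≠ y) (hxz : x ≠ z) (hyz : y ≠ z) (m : Fin 3) :
    m = x ∨ m = y ∨ m = z := by
  have := x.isLt; have := y.isLt; have := z.isLt; have := m.isLt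
  simp only [← Fin.val_ne_iff] at hxy hxz hyz
  simp only [Fin.ext_iff]
  omega

lemma fin3_no_four (a b c d : Fin 3) (h1 : a ≠ b) (h2 : a ≠ c) (h3 : a ≠ d)
    (h4 : b ≠ c) (h5 : b ≠ d) (h6 : c ≠ d) : False := by
  have := a.isLt; have := b.isLt; have := c.isLt; have := d.isLt
  simp only [← Fin.val_ne_iff] at *
  omega

/-- Concluding incidence argument of Case 1 in the proof of Theorem 1.1: with
`v₁, …, v_{p+1}` linearly independent spanning `U`, `u₁, u₂, u₃` pairwise
non-proportional vectors outside `U`, and `W` a 2-dimensional subspace with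
`u₁, u₂ ∈ W` and `u₃ ∉ W`, no 2-dimensional subspace `W'` can contain the vectors
at four distinct positions of the list `v₁, …, v_{p+1}, u₁, u₂, u₃`. -/
theorem stmt_13 (K : Type*) (V : Type*) [Field K] [AddCommGroup V] [Module K V]
    (p : ℕ) (hp : 0 < p) (v : Fin (p + 1) → V) (hv : LinearIndependent K v)
    (U : Submodule K V) (hU : U = Submodule.span K (Set.range v))
    (u : Fin 3 → V)
    (hu : ∀ k l : Fin 3, k ≠ l → u l ∉ Submodule.span K {u k})
    (huU : ∀ k, u k ∉ U)
    (W : Submodule K V) (hW : Module.finrank K W = 2)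
    (hu₁ : u 0 ∈ W) (hu₂ : u 1 ∈ W) (hu₃ : u 2 ∉ W)
    (f : Fin (p + 4) → V) (hf : f = Fin.append v u) :
    ¬ ∃ W' : Submodule K V, Module.finrank K W' = 2 ∧
      ∃ i j k l : Fin (p + 4), i ≠ j ∧ i ≠ k ∧ i ≠ l ∧ j ≠ k ∧ j ≠ l ∧ k ≠ l ∧
        f i ∈ W' ∧ f j ∈ W' ∧ f k ∈ W' ∧ f l ∈ W' := by
  rintro ⟨W', hW', i, j, k, l, hij, hik, hil, hjk, hjl, hkl, hi, hj, hk, hl⟩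
  have hWfin : FiniteDimensional K W := Module.finite_of_finrank_pos (by omega)
  have hW'fin : FiniteDimensional K W' := Module.finite_of_finrank_pos (by omega)
  -- pair of u's are linearly independent
  have hupair : ∀ x y : Fin 3, x ≠ y → LinearIndependent K ![u x, u y] := by
    intro x y hxy
    rw [linearIndependent_fin2]
    refine ⟨?_, ?_⟩
    · simp only [Matrix.cons_val_one, Matrix.head_cons, Matrix.cons_val_zero]
      intro h0
      exact hu x y hxy (h0 ▸ Submodule.zero_mem _)
    · intro a h
      refine hu y x hxy.symm ?_
      rw [Submodule.mem_span_singleton]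
      exact ⟨a, by simpa using h⟩
  -- Lemma B: all three u's cannot lie in W'
  have lemB : ∀ x y z : Fin 3, x ≠ y → x ≠ z → y ≠ z →
      u x ∈ W' → u y ∈ W' → u z ∈ W' → False := by
    intro x y z hxy hxz hyz hx hy hz
    have hall : ∀ m : Fin 3, u m ∈ W' := by
      intro m
      rcases fin3_cover x y z hxy hxz hyz m with rfl | rfl | rfl <;> assumption
    have hcard := finrank_span_eq_card (hupair 0 1 (by decide))
    simp only [Fintype.card_fin] at hcard
    have hle' : Submodule.span K (Set.range ![u 0, u 1]) ≤ W' := by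
      rw [Submodule.span_le]; rintro _ ⟨t, rfl⟩; fin_cases t <;> simpa using hall _
    have hleW : Submodule.span K (Set.range ![u 0, u 1]) ≤ W := by
      rw [Submodule.span_le]; rintro _ ⟨t, rfl⟩; fin_cases t <;> simpa
    have h1 : Submodule.span K (Set.range ![u 0, u 1]) = W' :=
      Submodule.eq_of_le_of_finrank_eq hle' (by rw [hcard, hW'])
    have h2 : Submodule.span K (Set.range ![u 0, u 1]) = W :=
      Submodule.eq_of_le_of_finrank_eq hleW (by rw [hcard, hW])
    exact hu₃ (h2 ▸ h1.symm ▸ hall 2)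
  -- two distinct v's in W' force W' ≤ U
  have hvpair : ∀ a b : Fin (p+1), a ≠ b → v a ∈ W' → v b ∈ W' → W' ≤ U := by
    intro a b hab ha hb
    have hli : LinearIndependent K (v ∘ ![a, b]) := hv.comp _ (inj2_aux hab)
    have hcard := finrank_span_eq_card hli
    simp only [Fintype.card_fin] at hcard
    have hle : Submodule.span K (Set.range (v ∘ ![a, b])) ≤ W' := by
      rw [Submodule.span_le]; rintro _ ⟨t, rfl⟩; fin_cases t <;> simpa
    have hWeq : Submodule.span K (Set.range (v ∘ ![a, b])) = W' :=
      Submodule.eq_of_le_of_finrank_eq hle (by rw [hcard, hW'])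
    rw [← hWeq, hU, Submodule.span_le]
    rintro _ ⟨t, rfl⟩
    exact Submodule.subset_span ⟨_, rfl⟩
  -- Lemma A: three distinct v's cannot lie in W'
  have lemA : ∀ a b c : Fin (p+1), a ≠ b → a ≠ c → b ≠ c →
      v a ∈ W' → v b ∈ W' → v c ∈ W' → False := by
    intro a b c hab hac hbc ha hb hc
    have hli : LinearIndependent K (v ∘ ![a, b, c]) := hv.comp _ (inj3_aux hab hac hbc)
    have hcard := finrank_span_eq_card hli
    simp only [Fintype.card_fin] at hcard
    have hle : Submodule.span K (Set.range (v ∘ ![a, b, c])) ≤ W' := by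
      rw [Submodule.span_le]; rintro _ ⟨t, rfl⟩; fin_cases t <;> simpa
    have := Submodule.finrank_mono hle
    omega
  -- Lemma C: two distinct u's plus two distinct v's cannot lie in W'
  have lemC : ∀ (x y : Fin 3) (a b : Fin (p+1)), x ≠ y → a ≠ b →
      u x ∈ W' → u y ∈ W' → v a ∈ W' → v b ∈ W' → False := by
    intro x y a b hxy hab hx hy ha hb
    exact huU x (hvpair a b hab ha hb hx)
  -- decompose indices via the sum equivalence
  obtain ⟨i, rfl⟩ := (finSumFinEquiv (m := p+1) (n := 3)).surjective i
  obtain ⟨j, rfl⟩ := (finSumFinEquiv (m := p+1) (n := 3)).surjective j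
  obtain ⟨k, rfl⟩ := (finSumFinEquiv (m := p+1) (n := 3)).surjective k
  obtain ⟨l, rfl⟩ := (finSumFinEquiv (m := p+1) (n := 3)).surjective l
  have hij' : i ≠ j := fun h => hij (by rw [h])
  have hik' : i ≠ k := fun h => hik (by rw [h])
  have hil' : i ≠ l := fun h => hil (by rw [h])
  have hjk' : j ≠ k := fun h => hjk (by rw [h])
  have hjl' : j ≠ l := fun h => hjl (by rw [h])
  have hkl' : k ≠ l := fun h => hkl (by rw [h])
  have hfe : ∀ s : Fin (p+1) ⊕ Fin 3,
      f (finSumFinEquiv (m := p+1) (n := 3) s) = Sum.elim v u s := by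
    rintro (a | a)
    · rw [hf, finSumFinEquiv_apply_left]; exact Fin.append_left v u a
    · rw [hf, finSumFinEquiv_apply_right]; exact Fin.append_right v u a
  rw [hfe i] at hi; rw [hfe j] at hj; rw [hfe k] at hk; rw [hfe l] at hl
  clear hij hik hil hjk hjl hkl hfe hf
  rcases i with a | a <;> rcases j with b | b <;> rcases k with c | c <;> rcases l with d | d <;>
    first
    | exact lemA a b c (fun h => hij' (congrArg _ h)) (fun h => hik' (congrArg _ h))
        (fun h => hjk' (congrArg _ h)) hi hj hk
    | exact lemA a b d (fun h => hij' (congrArg _ h)) (fun h => hil' (congrArg _ h))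
        (fun h => hjl' (congrArg _ h)) hi hj hl
    | exact lemA a c d (fun h => hik' (congrArg _ h)) (fun h => hil' (congrArg _ h))
        (fun h => hkl' (congrArg _ h)) hi hk hl
    | exact lemA b c d (fun h => hjk' (congrArg _ h)) (fun h => hjl' (congrArg _ h))
        (fun h => hkl' (congrArg _ h)) hj hk hl
    | exact lemB a b c (fun h => hij' (congrArg _ h)) (fun h => hik' (congrArg _ h))
        (fun h => hjk' (congrArg _ h)) hi hj hk
    | exact lemB a b d (fun h => hij' (congrArg _ h)) (fun h => hil' (congrArg _ h))
        (fun h => hjl' (congrArg _ h)) hi hj hl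
    | exact lemB a c d (fun h => hik' (congrArg _ h)) (fun h => hil' (congrArg _ h))
        (fun h => hkl' (congrArg _ h)) hi hk hl
    | exact lemB b c d (fun h => hjk' (congrArg _ h)) (fun h => hjl' (congrArg _ h))
        (fun h => hkl' (congrArg _ h)) hj hk hl
    | exact lemC a b c d (fun h => hij' (congrArg _ h)) (fun h => hkl' (congrArg _ h))
        hi hj hk hl
    | exact lemC a c b d (fun h => hik' (congrArg _ h)) (fun h => hjl' (congrArg _ h))
        hi hk hj hl
    | exact lemC a d b c (fun h => hil' (congrArg _ h)) (fun h => hjk' (congrArg _ h))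
        hi hl hj hk
    | exact lemC b c a d (fun h => hjk' (congrArg _ h)) (fun h => hil' (congrArg _ h))
        hj hk hi hl
    | exact lemC b d a c (fun h => hjl' (congrArg _ h)) (fun h => hik' (congrArg _ h))
        hj hl hi hk
    | exact lemC c d a b (fun h => hkl' (congrArg _ h)) (fun h => hij' (congrArg _ h))
        hk hl hi hj
    | exact fin3_no_four a b c d (fun h => hij' (congrArg _ h)) (fun h => hik' (congrArg _ h))
        (fun h => hil' (congrArg _ h)) (fun h => hjk' (congrArg _ h))
        (fun h => hjl' (congrArg _ h)) (fun h => hkl' (congrArg _ h))
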